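/- Let 0 < α < 1 and 0 < τ < 1. Then for every s with Re s > 0 one has s·√((1 + τs^α)/(1 + s^α)) = √(s²(1 + τs^α)/(1 + s^α)) (both square roots principal), and in particular Re( s·√((1 + τs^α)/(1 + s^α)) ) > 0. -/

import Mathlib

open Real Complex

private lemma cpow_re_im (x : ℂ) (hx : x ≠ 0) (r : ℝ) :
    (x ^ (r : ℂ)).re = Real.exp (r * Real.log (‖x‖)) * Real.cos (r * x.arg) ∧
    (x ^ (r : ℂ)).im = Real.exp (r * Real.log (‖x‖)) * Real.sin (r * x.arg) := by
  rw [Complex.cpow_def_of_ne_zero hx]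
  constructor
  · rw [Complex.exp_re]
    simp [Complex.log_re, Complex.log_im, mul_comm]
  · rw [Complex.exp_im]
    simp [Complex.log_re, Complex.log_im, mul_comm]

theorem sqrt_omega_eq_s_mul_sqrt_quotient
    (α τ : ℝ) (hα0 : 0 < α) (hα1 : α < 1) (hτ0 : 0 < τ) (hτ1 : τ < 1)
    (s : ℂ) (hs : 0 < s.re) :
    s * (((1 + (τ : ℂ) * s ^ (α : ℂ)) / (1 + s ^ (α : ℂ))) ^ (1/2 : ℂ))
      = (s ^ 2 * (1 + (τ : ℂ) * s ^ (α : ℂ)) / (1 + s ^ (α : ℂ))) ^ (1/2 : ℂ) ∧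
    0 < (s * (((1 + (τ : ℂ) * s ^ (α : ℂ)) / (1 + s ^ (α : ℂ))) ^ (1/2 : ℂ))).re := by
  have hπ : 0 < π := Real.pi_pos
  have hs0 : s ≠ 0 := fun h => by simp [h] at hs
  have hargs : |s.arg| < π / 2 := Complex.abs_arg_lt_pi_div_two_iff.2 (Or.inl hs)
  set z : ℂ := s ^ (α : ℂ) with hz
  obtain ⟨hzre, hzim⟩ := cpow_re_im s hs0 α
  rw [← hz] at hzre hzim
  clear_value z
  have hαa : |α * s.arg| < π / 2 := by
    rw [abs_mul, abs_of_pos hα0]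
    calc α * |s.arg| ≤ 1 * |s.arg| := by nlinarith [abs_nonneg s.arg]
    _ < π / 2 := by simpa using hargs
  have hE1 : 0 < Real.exp (α * Real.log (‖s‖)) := Real.exp_pos _
  have hzre' : 0 < z.re := by
    rw [hzre]
    have := Real.cos_pos_of_mem_Ioo (x := α * s.arg)
      ⟨by have := (abs_lt.1 hαa).1; linarith, (abs_lt.1 hαa).2⟩
    positivity
  have h1z : (1 + z) ≠ 0 := by
    intro h
    have : (1 + z).re = 0 := by rw [h]; simp
    simp only [Complex.add_re, Complex.one_re] at this
    linarith
  have h1τz : (1 + (τ : ℂ) * z) ≠ 0 := by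
    intro h
    have : (1 + (τ : ℂ) * z).re = 0 := by rw [h]; simp
    simp only [Complex.add_re, Complex.one_re, Complex.mul_re, Complex.ofReal_re,
      Complex.ofReal_im] at this
    nlinarith
  have hns : 0 < Complex.normSq (1 + z) := Complex.normSq_pos.2 h1z
  set q : ℂ := (1 + (τ : ℂ) * z) / (1 + z) with hq
  have h1 : (1 + (τ : ℂ) * z).re = 1 + τ * z.re := by simp [Complex.mul_re]
  have h2 : (1 + (τ : ℂ) * z).im = τ * z.im := by simp [Complex.mul_im]
  have h3 : (1 + z).re = 1 + z.re := by simp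
  have h4 : (1 + z).im = z.im := by simp
  have hqre : 0 < q.re := by
    rw [hq, Complex.div_re, h1, h2, h3, h4, ← add_div]
    have hnum : 0 < (1 + τ * z.re) * (1 + z.re) + τ * z.im * z.im := by
      nlinarith [mul_pos hτ0 hzre', mul_pos (mul_pos hτ0 hzre') hzre',
        mul_nonneg hτ0.le (mul_self_nonneg z.im)]
    exact div_pos hnum hns
  have hqim : q.im = (τ - 1) * z.im / Complex.normSq (1 + z) := by
    rw [hq, Complex.div_im, h1, h2, h3, h4]
    ring
  have hq0 : q ≠ 0 := fun h => by simp [h] at hqre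
  have half : (1/2 : ℂ) = ((1/2 : ℝ) : ℂ) := by norm_num
  set w : ℂ := q ^ (1/2 : ℂ) with hw
  obtain ⟨hwre, hwim⟩ := cpow_re_im q hq0 (1/2)
  rw [← half, ← hw] at hwre hwim
  have hw2 : w ^ 2 = q := by
    rw [hw]
    have h5 : (1/2 : ℂ) = (((2 : ℕ) : ℂ))⁻¹ := by norm_num
    rw [h5]
    exact Complex.cpow_nat_inv_pow q two_ne_zero
  clear_value q w
  have hargq : |q.arg| < π / 2 := Complex.abs_arg_lt_pi_div_two_iff.2 (Or.inl hqre)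
  have hwre' : 0 < w.re := by
    rw [hwre]
    have hb := abs_lt.1 hargq
    have := Real.cos_pos_of_mem_Ioo (x := 1/2 * q.arg)
      ⟨by linarith [hb.1], by linarith [hb.2]⟩
    positivity
  have hwimeq : q.im = 2 * w.re * w.im := by
    have := congrArg Complex.im hw2
    rw [sq, Complex.mul_im] at this
    linarith [this]
  have hsign : s.im * w.im ≤ 0 := by
    rcases lt_trichotomy s.im 0 with h | h | h
    · have ha : s.arg < 0 := Complex.arg_neg_iff.2 h
      have hsin : Real.sin (α * s.arg) < 0 := by
        apply Real.sin_neg_of_neg_of_neg_pi_lt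
        · exact mul_neg_of_pos_of_neg hα0 ha
        · have := (abs_lt.1 hαa).1; linarith
      have hzim' : z.im < 0 := by
        rw [hzim]; exact mul_neg_of_pos_of_neg hE1 hsin
      have hqim' : 0 < q.im := by
        rw [hqim]
        exact div_pos (mul_pos_of_neg_of_neg (by linarith) hzim') hns
      have hwim' : 0 < w.im := by
        have h9 : 0 < 2 * w.re * w.im := hwimeq ▸ hqim'
        rcases mul_pos_iff.1 h9 with ⟨-, h10⟩ | ⟨h10, -⟩
        · exact h10
        · linarith
      exact (mul_neg_of_neg_of_pos h hwim').le
    · have ha : s.arg = 0 := by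
        rw [Complex.arg_eq_zero_iff]; exact ⟨hs.le, h⟩
      have hzim' : z.im = 0 := by rw [hzim, ha]; simp
      have hqim' : q.im = 0 := by rw [hqim, hzim']; ring
      have h9 : 2 * w.re * w.im = 0 := by rw [← hwimeq, hqim']
      rcases mul_eq_zero.1 h9 with h10 | h10
      · linarith
      · rw [h, h10]; simp
    · have ha : 0 < s.arg := by
        rcases lt_or_eq_of_le (Complex.arg_nonneg_iff.2 h.le) with h' | h'
        · exact h'
        · exfalso
          have := (Complex.arg_eq_zero_iff.1 h'.symm).2
          linarith
      have hsin : 0 < Real.sin (α * s.arg) := by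
        apply Real.sin_pos_of_pos_of_lt_pi
        · positivity
        · have := (abs_lt.1 hαa).2; linarith
      have hzim' : 0 < z.im := by rw [hzim]; positivity
      have hqim' : q.im < 0 := by
        rw [hqim]
        exact div_neg_of_neg_of_pos (mul_neg_of_neg_of_pos (by linarith) hzim') hns
      have hwim' : w.im < 0 := by
        have h9 : 2 * w.re * w.im < 0 := hwimeq ▸ hqim'
        rcases mul_neg_iff.1 h9 with ⟨-, h10⟩ | ⟨h10, -⟩
        · exact h10
        · linarith
      exact (mul_neg_of_pos_of_neg h hwim').le
  have hlre : 0 < (s * w).re := by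
    rw [Complex.mul_re]
    have := mul_pos hs hwre'
    linarith
  set Ω : ℂ := s ^ 2 * (1 + (τ : ℂ) * z) / (1 + z) with hΩ
  have hΩq : Ω = s ^ 2 * q := by rw [hΩ, hq]; exact mul_div_assoc _ _ _
  have hΩ0 : Ω ≠ 0 := by
    rw [hΩq]
    exact mul_ne_zero (pow_ne_zero _ hs0) hq0
  set R : ℂ := Ω ^ (1/2 : ℂ) with hR
  obtain ⟨hRre', -⟩ := cpow_re_im Ω hΩ0 (1/2)
  rw [← half, ← hR] at hRre'
  have hR2 : R ^ 2 = Ω := by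
    rw [hR]
    have h5 : (1/2 : ℂ) = (((2 : ℕ) : ℂ))⁻¹ := by norm_num
    rw [h5]
    exact Complex.cpow_nat_inv_pow Ω two_ne_zero
  clear_value Ω R
  have hL2 : (s * w) ^ 2 = Ω := by rw [mul_pow, hw2, hΩq]
  have hRre : 0 ≤ R.re := by
    rw [hRre']
    have ha1 := Complex.neg_pi_lt_arg Ω
    have ha2 := Complex.arg_le_pi Ω
    have := Real.cos_nonneg_of_mem_Icc (x := 1/2 * Ω.arg)
      ⟨by linarith, by linarith⟩
    positivity
  have hfac : (s * w - R) * (s * w + R) = 0 := by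
    have h6 : (s * w) ^ 2 - R ^ 2 = 0 := by rw [hL2, hR2]; ring
    linear_combination h6
  have heq : s * w = R := by
    rcases mul_eq_zero.1 hfac with h | h
    · exact sub_eq_zero.1 h
    · exfalso
      have h7 : s * w = -R := by linear_combination h
      have h8 : (s * w).re = -R.re := by rw [h7]; simp
      linarith
  exact ⟨heq, hlre⟩
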